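/- Let σ be a permutation of F_2^n with c p-cycles and f fixed points acting on a self-dual code C (p an odd prime), and let C_φ = φ(E_σ(C)^*) ⊆ P^c. For any integer t with 1 ≤ t ≤ p-1, applying the substitution x → x^t to every coordinate of every codeword of C_φ yields a code C_φ' such that the binary code C' reconstructed from (C_π, C_φ') is equivalent to C (i.e., C' is obtained from C by a coordinate permutation). -/

import Mathlib

open Finset

/-- Hamming weight of a binary vector. -/
def wt {ι : Type*} [Fintype ι] (v : ι → ZMod 2) : ℕ :=
  (Finset.univ.filter fun i => v i ≠ 0).card

/-- Dual of a binary code under the standard dot product. -/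
def dualCode {ι : Type*} [Fintype ι] (C : Submodule (ZMod 2) (ι → ZMod 2)) :
    Submodule (ZMod 2) (ι → ZMod 2) where
  carrier := {x | ∀ c ∈ C, ∑ i, x i * c i = 0}
  add_mem' := by
    intro a b ha hb c hc
    have := ha c hc; have := hb c hc
    simp only [Pi.add_apply, add_mul, Finset.sum_add_distrib]
    simp [ha c hc, hb c hc]
  zero_mem' := by intro c hc; simp
  smul_mem' := by
    intro r a ha c hc
    simp only [Pi.smul_apply, smul_eq_mul, mul_assoc, ← Finset.mul_sum]
    simp [ha c hc]

/-- Fixed subcode F_σ(C). -/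
def fixedCode {ι : Type*} (σ : Equiv.Perm ι) (C : Submodule (ZMod 2) (ι → ZMod 2)) :
    Submodule (ZMod 2) (ι → ZMod 2) where
  carrier := {v | v ∈ C ∧ v ∘ σ = v}
  add_mem' := by
    rintro a b ⟨ha, ha'⟩ ⟨hb, hb'⟩
    refine ⟨C.add_mem ha hb, ?_⟩
    funext i
    simpa using congrFun (congrArg₂ (· + ·) ha' hb') i
  zero_mem' := ⟨C.zero_mem, rfl⟩
  smul_mem' := by
    rintro r a ⟨ha, ha'⟩
    exact ⟨C.smul_mem r ha, by funext i; simpa using congrArg (r • ·) (congrFun ha' i)⟩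

/-- Subcode E_σ(C): codewords with even weight on each cycle (and zero on fixed points). -/
def evenCode {ι : Type*} (p : ℕ) (σ : Equiv.Perm ι) (C : Submodule (ZMod 2) (ι → ZMod 2)) :
    Submodule (ZMod 2) (ι → ZMod 2) where
  carrier := {v | v ∈ C ∧ ∀ i, ∑ k ∈ Finset.range p, v ((σ ^ k) i) = 0}
  add_mem' := by
    rintro a b ⟨ha, ha'⟩ ⟨hb, hb'⟩
    refine ⟨C.add_mem ha hb, fun i => ?_⟩
    simp [Finset.sum_add_distrib, ha' i, hb' i]
  zero_mem' := ⟨C.zero_mem, by simp⟩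
  smul_mem' := by
    rintro r a ⟨ha, ha'⟩
    refine ⟨C.smul_mem r ha, fun i => ?_⟩
    simp only [Pi.smul_apply, smul_eq_mul]
    rw [← Finset.mul_sum, ha' i, mul_zero]

/-- Coordinate index set for an automorphism of type p-(c,f): `c` cycles of
length `p` followed by `f` fixed points. -/
abbrev Idx (p c f : ℕ) : Type := (Fin c × Fin p) ⊕ Fin f

/-- The standard permutation with `c` cycles of length `p` and `f` fixed points. -/
def stdPerm (p c f : ℕ) : Equiv.Perm (Idx p c f) :=
  Equiv.sumCongr (Equiv.prodCongr (Equiv.refl (Fin c)) (finRotate p)) (Equiv.refl (Fin f))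

/-- The projection π recording one bit per cycle and the fixed-point bits. -/
def proj (p c f : ℕ) [NeZero p] :
    (Idx p c f → ZMod 2) →ₗ[ZMod 2] ((Fin c ⊕ Fin f) → ZMod 2) where
  toFun v := Sum.elim (fun j => v (Sum.inl (j, 0))) (fun l => v (Sum.inr l))
  map_add' := by intro a b; funext i; cases i <;> simp
  map_smul' := by intro r a; funext i; cases i <;> simp

open Polynomial

/-- The ring F_2[x]/(x^p - 1). -/
abbrev Rp (p : ℕ) : Type :=
  Polynomial (ZMod 2) ⧸ Ideal.span {(Polynomial.X : Polynomial (ZMod 2)) ^ p - 1}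

/-- The quotient map F_2[x] → F_2[x]/(x^p - 1). -/
noncomputable def mkp (p : ℕ) : Polynomial (ZMod 2) →+* Rp p := Ideal.Quotient.mk _

/-- The ideal P of even-weight elements of F_2[x]/(x^p-1), generated by x - 1. -/
noncomputable def evenIdeal (p : ℕ) : Ideal (Rp p) :=
  Ideal.span {mkp p (Polynomial.X - 1)}

/-- Multiplication on (the subtype of) an ideal of a commutative ring. -/
noncomputable instance idealMul {R : Type*} [CommRing R] (I : Ideal R) : Mul I :=
  ⟨fun a b => ⟨a.1 * b.1, I.mul_mem_left a.1 b.2⟩⟩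
/-- The map φ sending a binary vector to its tuple of cycle-block polynomials. -/
noncomputable def phiMap (p c f : ℕ) :
    (Idx p c f → ZMod 2) →ₗ[ZMod 2] (Fin c → Rp p) where
  toFun v := fun j => ∑ k : Fin p, v (Sum.inl (j, k)) • (mkp p X) ^ (k : ℕ)
  map_add' := by
    intro a b; funext j
    simp [add_smul, Finset.sum_add_distrib]
  map_smul' := by
    intro r a; funext j
    simp [mul_smul, Finset.smul_sum]

/-- The ring endomorphism of F_2[x]/(x^p-1) induced by the substitution x ↦ x^t. -/
noncomputable def substHom (p t : ℕ) : Rp p →+* Rp p :=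
  Ideal.Quotient.lift _
    ((mkp p).comp (Polynomial.eval₂RingHom Polynomial.C (Polynomial.X ^ t)))
    (by
      intro a ha
      rw [Ideal.mem_span_singleton] at ha
      obtain ⟨b, rfl⟩ := ha
      simp only [RingHom.comp_apply, map_mul, coe_eval₂RingHom, eval₂_sub, eval₂_pow,
        eval₂_X, eval₂_one]
      have h2 : ((X : Polynomial (ZMod 2)) ^ p - 1) ∣ ((X ^ t) ^ p - 1) := by
        have := sub_dvd_pow_sub_pow ((X : Polynomial (ZMod 2)) ^ p) 1 t
        simpa [one_pow, ← pow_mul, Nat.mul_comm] using this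
      have h3 : mkp p ((X ^ t) ^ p - 1) = 0 :=
        (Ideal.Quotient.eq_zero_iff_mem).mpr (Ideal.mem_span_singleton.mpr h2)
      rw [h3, zero_mul])

/-- The lift sending a length-(c+f) vector to the corresponding vector constant on
each cycle. -/
def liftF (p c f : ℕ) : ((Fin c ⊕ Fin f) → ZMod 2) →ₗ[ZMod 2] (Idx p c f → ZMod 2) where
  toFun w := Sum.elim (fun jk => w (Sum.inl jk.1)) (fun l => w (Sum.inr l))
  map_add' := by intro a b; funext i; cases i <;> simp
  map_smul' := by intro r a; funext i; cases i <;> simp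

/-- The subspace of vectors vanishing on all fixed-point coordinates. -/
def zeroOnFixed (p c f : ℕ) : Submodule (ZMod 2) (Idx p c f → ZMod 2) where
  carrier := {v | ∀ l, v (Sum.inr l) = 0}
  add_mem' := by intro a b ha hb l; simp [ha l, hb l]
  zero_mem' := by intro l; rfl
  smul_mem' := by intro r a ha l; simp [ha l]

namespace Statement13Aux
open Polynomial

lemma smul_mk {p : ℕ} (a : ZMod 2) (x : Rp p) : a • x = mkp p (C a) * x := by
  fin_cases a
  · show (0 : ZMod 2) • x = mkp p (C 0) * x
    simp
  · show (1 : ZMod 2) • x = mkp p (C 1) * x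
    simp

lemma mkp_X_pow_p (p : ℕ) : (mkp p X) ^ p = (1 : Rp p) := by
  have h : mkp p (X ^ p - 1) = 0 :=
    Ideal.Quotient.eq_zero_iff_mem.mpr (Ideal.mem_span_singleton_self _)
  have h2 : mkp p (X ^ p) = mkp p 1 := by
    rwa [← sub_eq_zero, ← map_sub]
  simpa [map_pow] using h2

lemma mkp_X_pow_mod (p : ℕ) [NeZero p] (m : ℕ) :
    (mkp p X) ^ m = (mkp p X) ^ (m % p) := by
  conv_lhs => rw [← Nat.div_add_mod m p]
  rw [pow_add, pow_mul, mkp_X_pow_p, one_pow, one_mul]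

lemma substHom_mkp (p t : ℕ) (q : Polynomial (ZMod 2)) :
    substHom p t (mkp p q) = mkp p (q.eval₂ Polynomial.C (X ^ t)) :=
  Ideal.Quotient.lift_mk _ _ _

lemma substHom_X_pow (p t k : ℕ) :
    substHom p t ((mkp p X) ^ k) = (mkp p X) ^ (t * k) := by
  rw [← map_pow (mkp p), substHom_mkp, eval₂_X_pow, ← pow_mul, map_pow]

lemma substHom_smul (p t : ℕ) (a : ZMod 2) (x : Rp p) :
    substHom p t (a • x) = a • substHom p t x := by
  rw [smul_mk, map_mul, smul_mk]
  congr 1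
  rw [substHom_mkp, eval₂_C]

lemma lin_indep {p : ℕ} [NeZero p] (a : Fin p → ZMod 2)
    (h : ∑ k : Fin p, a k • (mkp p X) ^ (k : ℕ) = 0) : ∀ k, a k = 0 := by
  have hp0 : 0 < p := Nat.pos_of_ne_zero (NeZero.ne p)
  set q : Polynomial (ZMod 2) := ∑ k : Fin p, C (a k) * X ^ (k : ℕ) with hq
  have hmk : mkp p q = 0 := by
    rw [hq, map_sum, ← h]
    refine Finset.sum_congr rfl fun k _ => ?_
    rw [smul_mk, map_mul, map_pow]
  have hdvd : (X ^ p - 1 : Polynomial (ZMod 2)) ∣ q :=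
    Ideal.mem_span_singleton.mp (Ideal.Quotient.eq_zero_iff_mem.mp hmk)
  have hdegX : (X ^ p - 1 : Polynomial (ZMod 2)).degree = (p : ℕ) := by
    simpa using Polynomial.degree_X_pow_sub_C hp0 (1 : ZMod 2)
  have hdeg : q.degree < (X ^ p - 1 : Polynomial (ZMod 2)).degree := by
    rw [hdegX, hq]
    refine lt_of_le_of_lt (Polynomial.degree_sum_le _ _) ?_
    rw [Finset.sup_lt_iff (by exact_mod_cast WithBot.bot_lt_coe (p : ℕ))]
    intro k _
    exact lt_of_le_of_lt (Polynomial.degree_C_mul_X_pow_le _ _)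
      (by exact_mod_cast k.isLt)
  have hq0 : q = 0 := Polynomial.eq_zero_of_dvd_of_degree_lt hdvd hdeg
  intro k
  have hc : q.coeff (k : ℕ) = a k := by
    rw [hq, Polynomial.finset_sum_coeff]
    have : ∀ i : Fin p, (C (a i) * X ^ (i : ℕ)).coeff (k : ℕ) =
        if k = i then a i else 0 := by
      intro i
      rw [Polynomial.coeff_C_mul, Polynomial.coeff_X_pow]
      by_cases hik : k = i
      · simp [hik]
      · have : (k : ℕ) ≠ (i : ℕ) := fun hh => hik (Fin.val_injective hh)
        simp [this, hik]
    rw [Finset.sum_congr rfl fun i _ => this i]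
    simp
  rw [hq0] at hc
  simpa using hc.symm

end Statement13Aux

namespace Statement13Aux

open Fin.NatCast in
lemma finRotate_pow_apply {m : ℕ} (k : ℕ) (i : Fin (m + 1)) :
    (finRotate (m + 1) ^ k) i = i + (k : Fin (m + 1)) := by
  induction k with
  | zero => simp
  | succ k ih =>
      rw [pow_succ', Equiv.Perm.mul_apply, ih, finRotate_succ_apply, Nat.cast_add,
        Nat.cast_one, add_assoc]

lemma stdPerm_pow_inl {p c f : ℕ} (k : ℕ) (j : Fin c) (i : Fin p) :
    ((stdPerm p c f) ^ k) (Sum.inl (j, i)) = Sum.inl (j, (finRotate p ^ k) i) := by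
  induction k with
  | zero => rfl
  | succ k ih =>
      rw [pow_succ', pow_succ', Equiv.Perm.mul_apply, Equiv.Perm.mul_apply, ih]
      rfl

lemma stdPerm_pow_inr {p c f : ℕ} (k : ℕ) (l : Fin f) :
    ((stdPerm p c f) ^ k) (Sum.inr l) = Sum.inr l := by
  induction k with
  | zero => rfl
  | succ k ih =>
      rw [pow_succ', Equiv.Perm.mul_apply, ih]
      rfl

open Fin.NatCast in
lemma stdPerm_pow_p {p c f : ℕ} [NeZero p] (x : Idx p c f) :
    ((stdPerm p c f) ^ p) x = x := by
  obtain ⟨m, rfl⟩ := Nat.exists_eq_succ_of_ne_zero (NeZero.ne p)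
  cases x with
  | inl jk =>
      obtain ⟨j, i⟩ := jk
      rw [stdPerm_pow_inl, finRotate_pow_apply]
      rw [Fin.natCast_self, add_zero]
  | inr l => exact stdPerm_pow_inr _ _

open Fin.NatCast in
lemma fixed_const {p c f : ℕ} [NeZero p] {v : Idx p c f → ZMod 2}
    (hv : v ∘ stdPerm p c f = v) (j : Fin c) (k : Fin p) :
    v (Sum.inl (j, k)) = v (Sum.inl (j, 0)) := by
  obtain ⟨m, rfl⟩ := Nat.exists_eq_succ_of_ne_zero (NeZero.ne p)
  have step : ∀ i : Fin (m + 1), v (Sum.inl (j, i + 1)) = v (Sum.inl (j, i)) := by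
    intro i
    conv_rhs => rw [← hv]
    simp [stdPerm, finRotate_succ_apply]
  have key : ∀ n : ℕ, v (Sum.inl (j, (n : Fin (m + 1)))) = v (Sum.inl (j, 0)) := by
    intro n
    induction n with
    | zero => simp
    | succ n ih => rw [Nat.cast_add, Nat.cast_one, step, ih]
  have := key k.val
  rwa [Fin.cast_val_eq_self] at this

open Polynomial in
lemma phi_inj {p c f : ℕ} [NeZero p] {v w : Idx p c f → ZMod 2}
    (hv : ∀ l, v (Sum.inr l) = 0) (hw : ∀ l, w (Sum.inr l) = 0)
    (h : phiMap p c f v = phiMap p c f w) : v = w := by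
  funext x
  cases x with
  | inr l => rw [hv, hw]
  | inl jk =>
      obtain ⟨j, k⟩ := jk
      have hj : phiMap p c f v j = phiMap p c f w j := congrFun h j
      have hsum : ∑ k : Fin p,
          (v (Sum.inl (j, k)) - w (Sum.inl (j, k))) • (mkp p X) ^ (k : ℕ) = 0 := by
        have : ∑ k : Fin p, (v (Sum.inl (j, k)) - w (Sum.inl (j, k))) • (mkp p X) ^ (k : ℕ)
            = phiMap p c f v j - phiMap p c f w j := by
          simp only [phiMap, LinearMap.coe_mk, AddHom.coe_mk, sub_smul]
          rw [Finset.sum_sub_distrib]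
        rw [this, hj, sub_self]
      have := lin_indep _ hsum k
      exact sub_eq_zero.mp this

/-- The equivalence `Fin p ≃ ZMod p`. -/
def zEquiv (p : ℕ) [NeZero p] : Fin p ≃ ZMod p where
  toFun k := ((k : ℕ) : ZMod p)
  invFun z := ⟨z.val, ZMod.val_lt z⟩
  left_inv k := by
    ext
    simp [ZMod.val_natCast, Nat.mod_eq_of_lt k.isLt]
  right_inv z := by simp [ZMod.natCast_rightInverse z]

end Statement13Aux

noncomputable def substL (p t c : ℕ) : (Fin c → Rp p) →ₗ[ZMod 2] (Fin c → Rp p) :=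
  AddMonoidHom.toZModLinearMap 2
    { toFun := fun u j => substHom p t (u j)
      map_zero' := by funext j; simp
      map_add' := by intro u v; funext j; simp }


/-- Substituting x → x^t (1 ≤ t ≤ p-1) in every coordinate of `C_φ` and reconstructing
a binary code from `(C_π, C_φ')` yields a code equivalent to `C` (i.e. obtained from
`C` by a coordinate permutation). -/
theorem statement13 {p c f : ℕ} [NeZero p] (hp : p.Prime) (hodd : Odd p)
    (t : ℕ) (ht1 : 1 ≤ t) (ht2 : t ≤ p - 1)
    (C : Submodule (ZMod 2) (Idx p c f → ZMod 2))
    (hself : C = dualCode C)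
    (haut : ∀ v, v ∈ C ↔ v ∘ (stdPerm p c f) ∈ C) :
    ∃ ρ : Equiv.Perm (Idx p c f),
      ∀ v : Idx p c f → ZMod 2,
        (v ∈ Submodule.map (liftF p c f)
            (Submodule.map (proj p c f) (fixedCode (stdPerm p c f) C)) ⊔
          (Submodule.comap (phiMap p c f)
            (Submodule.span (ZMod 2)
              ((fun u : Fin c → Rp p => fun j => substHom p t (u j)) ''
                (Submodule.map (phiMap p c f) (evenCode p (stdPerm p c f) C)))) ⊓
            zeroOnFixed p c f)) ↔ v ∘ ρ ∈ C := by
  classical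
  haveI : Fact p.Prime := ⟨hp⟩
  have hp0 : 0 < p := hp.pos
  have hpodd2 : ((p : ℕ) : ZMod 2) = 1 := by
    have h1 : p % 2 = 1 := Nat.odd_iff.mp hodd
    rw [← ZMod.natCast_mod, h1, Nat.cast_one]
  have htwo : ∀ z : ZMod 2, z + z = 0 := by decide
  have htlt : t < p := by omega
  have ht0 : ((t : ℕ) : ZMod p) ≠ 0 := by
    rw [Ne, ZMod.natCast_eq_zero_iff]
    intro hdvd
    have := Nat.le_of_dvd (by omega) hdvd
    omega
  set σ := stdPerm p c f with hσ
  set τ : Equiv.Perm (Fin p) :=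
    ((Statement13Aux.zEquiv p).trans (Equiv.mulLeft₀ ((t : ℕ) : ZMod p) ht0)).trans
      (Statement13Aux.zEquiv p).symm with hτ
  have hτval : ∀ k : Fin p, ((τ k) : ℕ) = (t * (k : ℕ)) % p := by
    intro k
    have h1 : ((τ k) : ℕ) = (((t * (k : ℕ) : ℕ) : ZMod p)).val := by
      show ((((t : ℕ) : ZMod p) * (((k : ℕ) : ℕ) : ZMod p)).val) = _
      rw [← Nat.cast_mul]
    rw [h1, ZMod.val_natCast]
  set ρ : Equiv.Perm (Idx p c f) :=
    Equiv.sumCongr (Equiv.prodCongr (Equiv.refl (Fin c)) τ) (Equiv.refl (Fin f)) with hρ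
  have hρinl : ∀ (j : Fin c) (k : Fin p), ρ (Sum.inl (j, k)) = Sum.inl (j, τ k) :=
    fun _ _ => rfl
  have hρinr : ∀ l : Fin f, ρ (Sum.inr l) = Sum.inr l := fun _ => rfl
  have hρinvinl : ∀ (j : Fin c) (k : Fin p), ρ⁻¹ (Sum.inl (j, k)) = Sum.inl (j, τ⁻¹ k) :=
    fun _ _ => rfl
  have hρinvinr : ∀ l : Fin f, ρ⁻¹ (Sum.inr l) = Sum.inr l := fun _ => rfl
  -- iterated automorphism
  have hautpow : ∀ (k : ℕ) (w : Idx p c f → ZMod 2), w ∈ C → w ∘ ⇑(σ ^ k) ∈ C := by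
    intro k
    induction k with
    | zero => intro w hw; simpa using hw
    | succ k ih =>
        intro w hw
        have h1 := (haut _).mp (ih w hw)
        have h2 : (w ∘ ⇑(σ ^ k)) ∘ ⇑σ = w ∘ ⇑(σ ^ (k + 1)) := by
          funext x
          simp only [Function.comp_apply, pow_succ, Equiv.Perm.mul_apply]
        rwa [h2] at h1
  -- fixed vectors are invariant under ρ
  have hfixρ : ∀ a : Idx p c f → ZMod 2, a ∘ ⇑σ = a → ∀ x, a (ρ x) = a x := by
    intro a ha x
    cases x with
    | inl jk =>
        obtain ⟨j, k⟩ := jk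
        rw [hρinl, Statement13Aux.fixed_const ha j (τ k), Statement13Aux.fixed_const ha j k]
    | inr l => rw [hρinr]
  have hfixρinv : ∀ a : Idx p c f → ZMod 2, a ∘ ⇑σ = a → ∀ x, a (ρ⁻¹ x) = a x := by
    intro a ha x
    have := hfixρ a ha (ρ⁻¹ x)
    rw [show ρ (ρ⁻¹ x) = x from ρ.apply_symm_apply x] at this
    exact this.symm
  -- shifting a full-cycle sum
  have hshift : ∀ (w : Idx p c f → ZMod 2) (x : Idx p c f),
      ∑ k ∈ Finset.range p, w ((σ ^ k) (σ x)) = ∑ k ∈ Finset.range p, w ((σ ^ k) x) := by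
    intro w x
    have h3 : ∀ k, w ((σ ^ (k + 1)) x) = w ((σ ^ k) (σ x)) := by
      intro k; rw [pow_succ, Equiv.Perm.mul_apply]
    have h1 := Finset.sum_range_succ' (fun k => w ((σ ^ k) x)) p
    have h2 := Finset.sum_range_succ (fun k => w ((σ ^ k) x)) p
    have h4 : w ((σ ^ p) x) = w ((σ ^ 0) x) := by
      rw [Statement13Aux.stdPerm_pow_p]; simp
    have h5 : ∑ k ∈ Finset.range p, w ((σ ^ k) (σ x))
        = ∑ k ∈ Finset.range p, w ((σ ^ (k + 1)) x) :=
      Finset.sum_congr rfl fun k _ => (h3 k).symm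
    rw [h5]
    have h6 : ∑ k ∈ Finset.range p, w ((σ ^ (k + 1)) x) + w ((σ ^ 0) x)
        = ∑ k ∈ Finset.range p, w ((σ ^ k) x) + w ((σ ^ 0) x) := by
      rw [← h1, h2, h4]
    exact add_right_cancel h6
  -- lift of projection of a fixed vector
  have hlift : ∀ a : Idx p c f → ZMod 2, a ∘ ⇑σ = a →
      liftF p c f (proj p c f a) = a := by
    intro a ha
    funext x
    cases x with
    | inl jk =>
        obtain ⟨j, k⟩ := jk
        show a (Sum.inl (j, 0)) = a (Sum.inl (j, k))
        exact (Statement13Aux.fixed_const ha j k).symm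
    | inr l => rfl
  -- φ transport under ρ⁻¹
  have hphi : ∀ w : Idx p c f → ZMod 2,
      phiMap p c f (w ∘ ⇑ρ⁻¹) = fun j => substHom p t (phiMap p c f w j) := by
    intro w
    funext j
    have hR : substHom p t (phiMap p c f w j)
        = ∑ k : Fin p, w (Sum.inl (j, k)) • (mkp p Polynomial.X) ^ ((τ k : Fin p) : ℕ) := by
      show substHom p t
        (∑ k : Fin p, w (Sum.inl (j, k)) • (mkp p Polynomial.X) ^ (k : ℕ)) = _
      rw [map_sum]
      refine Finset.sum_congr rfl fun k _ => ?_
      rw [Statement13Aux.substHom_smul, Statement13Aux.substHom_X_pow,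
        Statement13Aux.mkp_X_pow_mod, ← hτval k]
    have hL : phiMap p c f (w ∘ ⇑ρ⁻¹) j
        = ∑ k : Fin p, w (Sum.inl (j, k)) • (mkp p Polynomial.X) ^ ((τ k : Fin p) : ℕ) := by
      show (∑ k : Fin p, (w ∘ ⇑ρ⁻¹) (Sum.inl (j, k)) • (mkp p Polynomial.X) ^ (k : ℕ)) = _
      refine (Fintype.sum_equiv τ _ _ ?_).symm
      intro k
      rw [Function.comp_apply, hρinvinl, show τ⁻¹ (τ k) = k from τ.symm_apply_apply k]
    rw [hL, hR]
  -- span of the substituted image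
  have hspan : Submodule.span (ZMod 2)
      ((fun u : Fin c → Rp p => fun j => substHom p t (u j)) ''
        (Submodule.map (phiMap p c f) (evenCode p σ C)))
      = Submodule.map (substL p t c)
          (Submodule.map (phiMap p c f) (evenCode p σ C)) := by
    have h1 : ((fun u : Fin c → Rp p => fun j => substHom p t (u j)) ''
        (Submodule.map (phiMap p c f) (evenCode p σ C)))
        = ↑(Submodule.map (substL p t c)
            (Submodule.map (phiMap p c f) (evenCode p σ C))) := by
      rw [Submodule.map_coe]; rfl
    rw [h1, Submodule.span_eq]
  -- even-code members vanish on fixed points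
  have hEzero : ∀ w, w ∈ evenCode p σ C → ∀ l : Fin f, w (Sum.inr l) = 0 := by
    intro w hw l
    have h1 := hw.2 (Sum.inr l)
    have h2 : ∀ k ∈ Finset.range p, w ((σ ^ k) (Sum.inr l)) = w (Sum.inr l) := by
      intro k _
      rw [hσ, Statement13Aux.stdPerm_pow_inr]
    rw [Finset.sum_congr rfl h2, Finset.sum_const, Finset.card_range,
      nsmul_eq_mul, hpodd2, one_mul] at h1
    exact h1
  refine ⟨ρ, fun v => ?_⟩
  constructor
  · -- forward direction
    intro hv
    rw [Submodule.mem_sup] at hv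
    obtain ⟨av, hav, bv, hbv, hsum⟩ := hv
    rw [Submodule.mem_map] at hav
    obtain ⟨y, hy, hy2⟩ := hav
    rw [Submodule.mem_map] at hy
    obtain ⟨a0, ha0, rfl⟩ := hy
    have havfix : av ∘ ⇑σ = av := by
      rw [← hy2, hlift a0 ha0.2]; exact ha0.2
    have havC : av ∈ C := by rw [← hy2, hlift a0 ha0.2]; exact ha0.1
    rw [Submodule.mem_inf] at hbv
    obtain ⟨hb1, hb2⟩ := hbv
    rw [Submodule.mem_comap, hspan, Submodule.mem_map] at hb1
    obtain ⟨y2, hy2', hy3⟩ := hb1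
    rw [Submodule.mem_map] at hy2'
    obtain ⟨w, hwE, rfl⟩ := hy2'
    have hw0 : ∀ l, w (Sum.inr l) = 0 := hEzero w hwE
    have hwρ0 : ∀ l, (w ∘ ⇑ρ⁻¹) (Sum.inr l) = 0 := by
      intro l
      rw [Function.comp_apply, hρinvinr]
      exact hw0 l
    have hphib : phiMap p c f (w ∘ ⇑ρ⁻¹) = phiMap p c f bv := by
      rw [hphi w]; exact hy3
    have hbw : bv = w ∘ ⇑ρ⁻¹ := (Statement13Aux.phi_inj hwρ0 hb2 hphib).symm
    have hvρ : v ∘ ⇑ρ = av + w := by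
      funext x
      calc v (ρ x) = av (ρ x) + bv (ρ x) := by rw [← hsum]; rfl
        _ = av x + w x := by
            rw [hfixρ av havfix, hbw, Function.comp_apply, show ρ⁻¹ (ρ x) = x from ρ.symm_apply_apply x]
    rw [hvρ]
    exact C.add_mem havC hwE.1
  · -- backward direction
    intro hv
    set w := v ∘ ⇑ρ with hwdef
    set a : Idx p c f → ZMod 2 := fun i => ∑ k ∈ Finset.range p, w ((σ ^ k) i) with hadef
    have hafix : a ∘ ⇑σ = a := by funext x; exact hshift w x
    have haC : a ∈ C := by
      have h1 : a = ∑ k ∈ Finset.range p, w ∘ ⇑(σ ^ k) := by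
        funext i
        rw [Finset.sum_apply]
        rfl
      rw [h1]
      exact Submodule.sum_mem _ fun k _ => hautpow k w hv
    have hainv : ∀ (n : ℕ) (x : Idx p c f), a ((σ ^ n) x) = a x := by
      intro n
      induction n with
      | zero => intro x; simp
      | succ n ih =>
          intro x
          rw [pow_succ, Equiv.Perm.mul_apply, ih (σ x)]
          exact congrFun hafix x
    set e := w + a with hedef
    have heC : e ∈ C := C.add_mem hv haC
    have heven : ∀ i, ∑ k ∈ Finset.range p, e ((σ ^ k) i) = 0 := by
      intro i
      have h1 : ∀ k ∈ Finset.range p, e ((σ ^ k) i) = w ((σ ^ k) i) + a i := by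
        intro k _
        show w _ + a _ = _
        rw [hainv k i]
      rw [Finset.sum_congr rfl h1, Finset.sum_add_distrib, Finset.sum_const,
        Finset.card_range, nsmul_eq_mul, hpodd2, one_mul]
      exact htwo _
    have heE : e ∈ evenCode p σ C := ⟨heC, heven⟩
    have hez : ∀ l, e (Sum.inr l) = 0 := hEzero e heE
    rw [Submodule.mem_sup]
    refine ⟨a, ?_, e ∘ ⇑ρ⁻¹, Submodule.mem_inf.mpr ⟨?_, ?_⟩, ?_⟩
    · exact ⟨proj p c f a, Submodule.mem_map_of_mem ⟨haC, hafix⟩, hlift a hafix⟩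
    · rw [Submodule.mem_comap, hspan]
      exact ⟨phiMap p c f e, Submodule.mem_map_of_mem heE, (hphi e).symm⟩
    · intro l
      show e (ρ⁻¹ (Sum.inr l)) = 0
      rw [hρinvinr]
      exact hez l
    · funext x
      show a x + e (ρ⁻¹ x) = v x
      have h1 : e (ρ⁻¹ x) = v x + a x := by
        show w (ρ⁻¹ x) + a (ρ⁻¹ x) = _
        rw [hfixρinv a hafix]
        congr 1
        show v (ρ (ρ⁻¹ x)) = v x
        rw [show ρ (ρ⁻¹ x) = x from ρ.apply_symm_apply x]
      rw [h1, add_comm (v x), ← add_assoc, htwo, zero_add]
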